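/- Let G be a finite simple graph whose vertices carry a 2-coloring, with fairlet vector (1,1). If G admits at least one fair clustering, then G admits a fair clustering P whose cost is minimum among all fair clusterings of G and such that every cluster of P containing more than 2 vertices induces a connected subgraph of G. -/

import Mathlib

open Finset

open scoped Classical

noncomputable section

variable {V : Type*}

/-- Two vertices lie in the same cluster of the clustering `P`. -/
def sameCluster [Fintype V] (P : Finpartition (Finset.univ : Finset V)) (v w : V) : Prop :=
  ∃ t ∈ P.parts, v ∈ t ∧ w ∈ t

/-- The cost of a clustering of the vertex set of `G`: the number of edges of `G` with
endpoints in different clusters plus the number of non-adjacent (unordered) pairs of distinct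
vertices lying in the same cluster. (Ordered pairs are counted and divided by two.) -/
def clusterCost [Fintype V] (G : SimpleGraph V)
    (P : Finpartition (Finset.univ : Finset V)) : ℕ :=
  (Finset.univ.offDiag.filter fun p : V × V => G.Adj p.1 p.2 ∧ ¬ sameCluster P p.1 p.2).card / 2
    + (Finset.univ.offDiag.filter fun p : V × V =>
        ¬ G.Adj p.1 p.2 ∧ sameCluster P p.1 p.2).card / 2

/-- For the 2-coloring `χ` and the fairlet vector `(1,1)`, a set is fair iff it contains
equally many vertices of color `0` (red) and of color `1` (blue). -/
def IsBalanced (χ : V → Fin 2) (W : Finset V) : Prop :=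
  (W.filter fun v => χ v = 0).card = (W.filter fun v => χ v = 1).card

/-- A clustering is fair (w.r.t. the fairlet vector `(1,1)`) if each cluster is balanced. -/
def IsBalancedClustering [Fintype V] (χ : V → Fin 2)
    (P : Finpartition (Finset.univ : Finset V)) : Prop :=
  ∀ t ∈ P.parts, IsBalanced χ t

lemma sameCluster_symm [Fintype V] {P : Finpartition (Finset.univ : Finset V)} {v w : V}
    (h : sameCluster P v w) : sameCluster P w v := by
  obtain ⟨t, ht, hv, hw⟩ := h; exact ⟨t, ht, hw, hv⟩


lemma even_card_swap {α : Type*} : ∀ s : Finset (α × α),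
    (∀ p ∈ s, Prod.swap p ∈ s) → (∀ p ∈ s, p.1 ≠ p.2) → Even s.card := by
  classical
  intro s
  induction s using Finset.strongInduction with
  | _ s ih =>
    intro hswap hne
    rcases s.eq_empty_or_nonempty with rfl | ⟨p, hp⟩
    · simp
    · have hps : Prod.swap p ∈ s := hswap p hp
      have hpp : Prod.swap p ≠ p := by
        intro h
        exact hne p hp (by simpa [Prod.ext_iff, eq_comm] using h)
      have hps' : Prod.swap p ∈ s.erase p := Finset.mem_erase.2 ⟨hpp, hps⟩
      set s' := (s.erase p).erase (Prod.swap p) with hs'def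
      have hsub : s' ⊆ s := (Finset.erase_subset _ _).trans (Finset.erase_subset _ _)
      have hpns : p ∉ s' := by
        simp [hs'def]
      have hssub : s' ⊂ s := Finset.ssubset_iff_of_subset hsub |>.2 ⟨p, hp, hpns⟩
      have hcard : s.card = s'.card + 2 := by
        have h1 : (s.erase p).card + 1 = s.card := Finset.card_erase_add_one hp
        have h2 : s'.card + 1 = (s.erase p).card := Finset.card_erase_add_one hps'
        omega
      have hswap' : ∀ q ∈ s', Prod.swap q ∈ s' := by
        intro q hq
        have hq1 : q ≠ Prod.swap p := (Finset.mem_erase.1 hq).1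
        have hq2 : q ≠ p := (Finset.mem_erase.1 (Finset.mem_erase.1 hq).2).1
        have hq3 : q ∈ s := hsub hq
        refine Finset.mem_erase.2 ⟨?_, Finset.mem_erase.2 ⟨?_, hswap q hq3⟩⟩
        · intro h
          exact hq2 (by simpa using congrArg Prod.swap h)
        · intro h
          exact hq1 (by simpa using congrArg Prod.swap h)
      have hne' : ∀ q ∈ s', q.1 ≠ q.2 := fun q hq => hne q (hsub hq)
      obtain ⟨k, hk⟩ := ih s' hssub hswap' hne'
      exact ⟨k + 1, by omega⟩


def badPairs [Fintype V] (G : SimpleGraph V) (P : Finpartition (Finset.univ : Finset V)) :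
    Finset (V × V) :=
  Finset.univ.offDiag.filter fun p : V × V =>
    (G.Adj p.1 p.2 ∧ ¬ sameCluster P p.1 p.2) ∨ (¬ G.Adj p.1 p.2 ∧ sameCluster P p.1 p.2)

lemma clusterCost_eq_badPairs [Fintype V] (G : SimpleGraph V)
    (P : Finpartition (Finset.univ : Finset V)) :
    clusterCost G P = (badPairs G P).card / 2 := by
  classical
  set s1 := Finset.univ.offDiag.filter
    (fun p : V × V => G.Adj p.1 p.2 ∧ ¬ sameCluster P p.1 p.2) with hs1
  set s2 := Finset.univ.offDiag.filter
    (fun p : V × V => ¬ G.Adj p.1 p.2 ∧ sameCluster P p.1 p.2) with hs2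
  have hunion : badPairs G P = s1 ∪ s2 := by
    rw [hs1, hs2, badPairs, filter_or]
  have hdisj : Disjoint s1 s2 := by
    rw [Finset.disjoint_left]
    intro p hp1 hp2
    rw [hs1, mem_filter] at hp1
    rw [hs2, mem_filter] at hp2
    exact hp2.2.1 hp1.2.1
  have hcard : (badPairs G P).card = s1.card + s2.card := by
    rw [hunion, card_union_of_disjoint hdisj]
  have hne1 : ∀ p ∈ s1, p.1 ≠ p.2 := by
    intro p hp
    exact (Finset.mem_offDiag.1 (mem_filter.1 hp).1).2.2
  have hne2 : ∀ p ∈ s2, p.1 ≠ p.2 := by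
    intro p hp
    exact (Finset.mem_offDiag.1 (mem_filter.1 hp).1).2.2
  have hsw1 : ∀ p ∈ s1, Prod.swap p ∈ s1 := by
    intro p hp
    rw [hs1, mem_filter] at hp ⊢
    refine ⟨Finset.mem_offDiag.2 ⟨mem_univ _, mem_univ _, (hne1 p (by rw [hs1, mem_filter]; exact hp)).symm⟩, ?_, ?_⟩
    · exact hp.2.1.symm
    · exact fun h => hp.2.2 (sameCluster_symm h)
  have hsw2 : ∀ p ∈ s2, Prod.swap p ∈ s2 := by
    intro p hp
    rw [hs2, mem_filter] at hp ⊢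
    refine ⟨Finset.mem_offDiag.2 ⟨mem_univ _, mem_univ _, (hne2 p (by rw [hs2, mem_filter]; exact hp)).symm⟩, ?_, ?_⟩
    · exact fun h => hp.2.1 h.symm
    · exact sameCluster_symm hp.2.2
  obtain ⟨k, hk⟩ := even_card_swap s1 hsw1 hne1
  obtain ⟨l, hl⟩ := even_card_swap s2 hsw2 hne2
  rw [clusterCost, ← hs1, ← hs2, hcard]
  omega

set_option maxHeartbeats 3000000

/-- **Lemma 2.** For a 2-colored graph with fairlet vector `(1,1)`: if a fair
clustering exists, then there is a minimum-cost fair clustering in which every cluster with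
more than `2` vertices induces a connected subgraph of `G`. -/
theorem exists_min_cost_fair_clustering_connected_large_clusters
    {V : Type*} [Fintype V] (G : SimpleGraph V) (χ : V → Fin 2)
    (hex : ∃ Q : Finpartition (Finset.univ : Finset V), IsBalancedClustering χ Q) :
    ∃ P : Finpartition (Finset.univ : Finset V),
      IsBalancedClustering χ P ∧
      (∀ Q : Finpartition (Finset.univ : Finset V),
        IsBalancedClustering χ Q → clusterCost G P ≤ clusterCost G Q) ∧
      ∀ t ∈ P.parts, 2 < t.card → (G.induce (t : Set V)).Connected := by
  classical
  obtain ⟨Q₀, hQ₀⟩ := hex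
  set costS : Set ℕ :=
    {n | ∃ Q : Finpartition (Finset.univ : Finset V), IsBalancedClustering χ Q ∧ clusterCost G Q = n}
    with hcostS
  have hSne : costS.Nonempty := ⟨_, Q₀, hQ₀, rfl⟩
  set m := sInf costS with hm
  set T : Set ℕ := {k | ∃ Q : Finpartition (Finset.univ : Finset V), IsBalancedClustering χ Q ∧
    clusterCost G Q = m ∧
    (Finset.univ.offDiag.filter fun p : V × V => sameCluster Q p.1 p.2).card = k} with hT
  have hTne : T.Nonempty := by
    obtain ⟨Q, hQ, hQc⟩ := Nat.sInf_mem hSne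
    exact ⟨_, Q, hQ, hQc, rfl⟩
  obtain ⟨P, hPfair, hPcost, hPM⟩ := Nat.sInf_mem hTne
  refine ⟨P, hPfair, ?_, ?_⟩
  · intro Q hQ
    rw [hPcost]
    exact Nat.sInf_le ⟨Q, hQ, rfl⟩
  · intro t ht htcard
    by_contra hconn
    -- extract a "component-like" set C
    have htne : t.Nonempty := Finset.card_pos.1 (by omega)
    have hnonempty : Nonempty ((t : Set V) : Type _) := by
      obtain ⟨v, hv⟩ := htne; exact ⟨⟨v, by simpa using hv⟩⟩
    rw [SimpleGraph.connected_iff] at hconn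
    push_neg at hconn
    have hnp : ¬ (G.induce (t : Set V)).Preconnected := fun h => (hconn h).false hnonempty.some
    rw [SimpleGraph.Preconnected] at hnp
    push_neg at hnp
    obtain ⟨x, y, hxy⟩ := hnp
    set C : Finset V := t.filter
      (fun z => ∃ hz : z ∈ (t : Set V), (G.induce (t : Set V)).Reachable x ⟨z, hz⟩) with hC
    have hCsub : C ⊆ t := filter_subset _ _
    have hxt : (x : V) ∈ t := by exact_mod_cast x.2
    have hyt : (y : V) ∈ t := by exact_mod_cast y.2
    have hxC : (x : V) ∈ C := by
      rw [hC, mem_filter]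
      exact ⟨hxt, x.2, by exact SimpleGraph.Reachable.refl _⟩
    have hyC : (y : V) ∉ C := by
      intro hy
      rw [hC, mem_filter] at hy
      obtain ⟨-, hz, hr⟩ := hy
      exact hxy hr
    have hNoEdge : ∀ u ∈ C, ∀ w ∈ t, w ∉ C → ¬ G.Adj u w := by
      intro u hu w hw hwC hadj
      rw [hC, mem_filter] at hu
      obtain ⟨hut, hu', hr⟩ := hu
      apply hwC
      rw [hC, mem_filter]
      refine ⟨hw, by exact_mod_cast hw, hr.trans (SimpleGraph.Adj.reachable ?_)⟩
      exact hadj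
    -- colors
    have hbal : IsBalanced χ t := hPfair t ht
    have hfin2 : ∀ c : Fin 2, c = 0 ∨ c = 1 := by decide
    have hsplit : (t.filter fun v => χ v = 0).card + (t.filter fun v => χ v = 1).card = t.card := by
      have h := card_filter_add_card_filter_not (s := t) (p := fun v => χ v = 0)
      have heq : t.filter (fun v => ¬ χ v = 0) = t.filter (fun v => χ v = 1) := by
        apply filter_congr
        intro v hv
        rcases hfin2 (χ v) with h | h <;> simp [h]
      rwa [heq] at h
    have hAllNot : ∀ c : Fin 2, ¬ (∀ v ∈ t, χ v = c) := by
      intro c hall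
      have h0 : (t.filter fun v => χ v = 0).card = (t.filter fun v => χ v = 1).card := hbal
      rcases hfin2 c with rfl | rfl
      · have : t.filter (fun v => χ v = 1) = ∅ := by
          rw [filter_eq_empty_iff]
          intro v hv
          rw [hall v hv]; decide
        have hc1 : (t.filter fun v => χ v = 1).card = 0 := by rw [this]; simp
        omega
      · have : t.filter (fun v => χ v = 0) = ∅ := by
          rw [filter_eq_empty_iff]
          intro v hv
          rw [hall v hv]; decide
        have hc0 : (t.filter fun v => χ v = 0).card = 0 := by rw [this]; simp
        omega
    have hmain : ∃ a ∈ C, ∃ b ∈ t, b ∉ C ∧ χ a ≠ χ b := by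
      by_cases h0 : χ (x : V) ≠ χ (y : V)
      · exact ⟨x, hxC, y, hyt, hyC, h0⟩
      · push_neg at h0
        have hE : ∃ e ∈ t, χ e ≠ χ (x : V) := by
          by_contra h
          push_neg at h
          exact hAllNot (χ (x : V)) h
        obtain ⟨e, het, he⟩ := hE
        by_cases heC : e ∈ C
        · exact ⟨e, heC, y, hyt, hyC, fun h => he (h.trans h0.symm)⟩
        · exact ⟨(x : V), hxC, e, het, heC, fun h => he h.symm⟩
    obtain ⟨a, haC, b, hbt, hbC, hab⟩ := hmain
    have hat : a ∈ t := hCsub haC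
    have habne : a ≠ b := fun h => hbC (h ▸ haC)
    set A₁ : Finset V := {a, b} with hA₁
    set A₂ : Finset V := t \ A₁ with hA₂
    have haA₁ : a ∈ A₁ := mem_insert_self a {b}
    have hbA₁ : b ∈ A₁ := mem_insert_of_mem (mem_singleton_self b)
    have hA₁sub : A₁ ⊆ t := by
      intro z hz
      rcases mem_insert.1 hz with rfl | hz
      · exact hat
      · rw [mem_singleton] at hz; exact hz ▸ hbt
    have hA₁card : A₁.card = 2 := card_pair habne
    have hA₂sub : A₂ ⊆ t := sdiff_subset
    have hA₂card : A₂.card = t.card - 2 := by rw [hA₂, card_sdiff_of_subset hA₁sub, hA₁card]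
    have hA₂ne : A₂.Nonempty := card_pos.1 (by omega)
    have hdisj12 : Disjoint A₁ A₂ := disjoint_sdiff
    have hunion12 : A₁ ∪ A₂ = t := union_sdiff_of_subset hA₁sub
    have hA₁A₂ne : A₁ ≠ A₂ := by
      intro h
      exact (mem_sdiff.1 (h ▸ haA₁)).2 haA₁
    have hpd : ∀ u ∈ P.parts, u ≠ t → Disjoint t u := fun u hu hut =>
      P.disjoint (mem_coe.2 ht) (mem_coe.2 hu) (fun h => hut h.symm)
    set newparts : Finset (Finset V) := insert A₁ (insert A₂ (P.parts.erase t)) with hnew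
    have hP'supIndep : newparts.SupIndep id := by
      rw [Finset.supIndep_iff_pairwiseDisjoint]
      intro u hu v hv huv
      simp only [hnew, coe_insert, Set.mem_insert_iff, mem_coe, mem_erase] at hu hv
      have hcase : ∀ w, w = A₁ ∨ w = A₂ ∨ w ≠ t ∧ w ∈ P.parts → w ⊆ t ∨ w ≠ t ∧ w ∈ P.parts := by
        rintro w (rfl | rfl | hw)
        · exact Or.inl hA₁sub
        · exact Or.inl hA₂sub
        · exact Or.inr hw
      rcases hu with rfl | rfl | hu <;> rcases hv with rfl | rfl | hv
      · exact absurd rfl huv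
      · exact hdisj12
      · exact Finset.disjoint_of_subset_left hA₁sub (hpd v hv.2 hv.1)
      · exact hdisj12.symm
      · exact absurd rfl huv
      · exact Finset.disjoint_of_subset_left hA₂sub (hpd v hv.2 hv.1)
      · exact Finset.disjoint_of_subset_right hA₁sub (hpd u hu.2 hu.1).symm
      · exact Finset.disjoint_of_subset_right hA₂sub (hpd u hu.2 hu.1).symm
      · exact P.disjoint (mem_coe.2 hu.2) (mem_coe.2 hv.2) huv
    have hP'sup : newparts.sup id = Finset.univ := by
      have h2 : (insert t (P.parts.erase t)).sup id = Finset.univ := by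
        rw [insert_erase ht]; exact P.sup_parts
      rw [sup_insert, id_eq] at h2
      rw [hnew, sup_insert, sup_insert, id_eq, id_eq, ← sup_assoc]
      have : A₁ ⊔ A₂ = t := by rw [← hunion12]; rfl
      rw [this, h2]
    have hP'bot : ⊥ ∉ newparts := by
      rw [hnew]
      intro h
      rcases mem_insert.1 h with h | h
      · exact (nonempty_iff_ne_empty.1 ⟨a, haA₁⟩) h.symm
      rcases mem_insert.1 h with h | h
      · exact (nonempty_iff_ne_empty.1 hA₂ne) h.symm
      · exact P.bot_notMem (mem_of_mem_erase h)
    set P' : Finpartition (Finset.univ : Finset V) := ⟨newparts, hP'supIndep, hP'sup, hP'bot⟩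
      with hP'def
    have hP'parts : P'.parts = newparts := rfl
    have hA₁mem : A₁ ∈ P'.parts := mem_insert_self _ _
    have hA₂mem : A₂ ∈ P'.parts := mem_insert_of_mem (mem_insert_self _ _)
    have holdmem : ∀ u ∈ P.parts, u ≠ t → u ∈ P'.parts := fun u hu hune =>
      mem_insert_of_mem (mem_insert_of_mem (mem_erase.2 ⟨hune, hu⟩))
    have hmem' : ∀ u ∈ P'.parts, u = A₁ ∨ u = A₂ ∨ (u ∈ P.parts ∧ u ≠ t) := by
      intro u hu
      simp only [hP'parts, hnew, mem_insert, mem_erase] at hu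
      tauto
    have hsame'P : ∀ v w : V, sameCluster P' v w → sameCluster P v w := by
      rintro v w ⟨u, hu, hv, hw⟩
      rcases hmem' u hu with rfl | rfl | ⟨hu', -⟩
      · exact ⟨t, ht, hA₁sub hv, hA₁sub hw⟩
      · exact ⟨t, ht, hA₂sub hv, hA₂sub hw⟩
      · exact ⟨u, hu', hv, hw⟩
    have hsame_t : ∀ v w : V, v ∈ t → w ∈ t →
        (sameCluster P' v w ↔ ((v ∈ A₁ ∧ w ∈ A₁) ∨ (v ∈ A₂ ∧ w ∈ A₂))) := by
      intro v w hv hw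
      constructor
      · rintro ⟨u, hu, hvu, hwu⟩
        rcases hmem' u hu with rfl | rfl | ⟨hu', hune⟩
        · exact Or.inl ⟨hvu, hwu⟩
        · exact Or.inr ⟨hvu, hwu⟩
        · exact absurd (P.eq_of_mem_parts hu' ht hvu hv) hune
      · rintro (⟨hv1, hw1⟩ | ⟨hv2, hw2⟩)
        · exact ⟨A₁, hA₁mem, hv1, hw1⟩
        · exact ⟨A₂, hA₂mem, hv2, hw2⟩
    have hsame_out : ∀ v w : V, ¬ (v ∈ t ∧ w ∈ t) → (sameCluster P' v w ↔ sameCluster P v w) := by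
      intro v w hvw
      constructor
      · exact hsame'P v w
      · rintro ⟨u, hu, hvu, hwu⟩
        have hune : u ≠ t := by
          rintro rfl
          exact hvw ⟨hvu, hwu⟩
        exact ⟨u, holdmem u hu hune, hvu, hwu⟩
    -- the swap involution
    set σ : V → V := ⇑(Equiv.swap a b) with hσ
    have hσa : σ a = b := Equiv.swap_apply_left a b
    have hσb : σ b = a := Equiv.swap_apply_right a b
    have hσid : ∀ z, z ∉ A₁ → σ z = z := by
      intro z hz
      exact Equiv.swap_apply_of_ne_of_ne (fun h => hz (h ▸ haA₁)) (fun h => hz (h ▸ hbA₁))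
    have hσt : ∀ z ∈ t, σ z ∈ t := by
      intro z hz
      by_cases h : z ∈ A₁
      · rcases mem_insert.1 h with rfl | h
        · rw [hσa]; exact hbt
        · rw [mem_singleton] at h; subst h; rw [hσb]; exact hat
      · rw [hσid z h]; exact hz
    have hσA₁ : ∀ z, σ z ∈ A₁ ↔ z ∈ A₁ := by
      intro z
      by_cases h : z ∈ A₁
      · rcases mem_insert.1 h with rfl | h'
        · rw [hσa]; simp [hbA₁, h]
        · rw [mem_singleton] at h'; subst h'; rw [hσb]; simp [haA₁, h]
      · rw [hσid z h]
    have hσinj : Function.Injective σ := (Equiv.swap a b).injective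
    set D : Finset (V × V) := t.offDiag.filter (fun p => ¬ (p.1 ∈ A₁ ↔ p.2 ∈ A₁)) with hD
    set Dp := D.filter (fun p => G.Adj p.1 p.2) with hDp
    set Dm := D.filter (fun p => ¬ G.Adj p.1 p.2) with hDm
    have hkey : ∀ v w : V, v ∈ A₁ → w ∈ t → w ∉ A₁ → G.Adj v w → ¬ G.Adj (σ v) w := by
      intro v w hv hwt hwA hadj
      rcases mem_insert.1 hv with rfl | hv'
      · have hwC : w ∈ C := by
          by_contra hwC
          exact hNoEdge v haC w hwt hwC hadj
        rw [hσa]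
        intro h
        exact hNoEdge w hwC b hbt hbC h.symm
      · rw [mem_singleton] at hv'; subst hv'
        have hwC : w ∉ C := by
          intro hwC
          exact hNoEdge w hwC v hbt hbC hadj.symm
        rw [hσb]
        exact hNoEdge a haC w hwt hwC
    have hDpDm : Dp.card ≤ Dm.card := by
      apply Finset.card_le_card_of_injOn (fun p => (σ p.1, σ p.2))
      · intro p hp
        simp only [Finset.mem_coe, hDp, hDm, hD, mem_filter, Finset.mem_offDiag] at hp ⊢
        obtain ⟨⟨⟨h1t, h2t, hne⟩, hcross⟩, hadj⟩ := hp
        refine ⟨⟨⟨hσt _ h1t, hσt _ h2t, fun h => hne (hσinj h)⟩, by rw [hσA₁, hσA₁]; exact hcross⟩, ?_⟩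
        by_cases h1 : p.1 ∈ A₁
        · have h2 : p.2 ∉ A₁ := fun h => hcross (iff_of_true h1 h)
          rw [hσid _ h2]
          exact hkey p.1 p.2 h1 h2t h2 hadj
        · have h2 : p.2 ∈ A₁ := by tauto
          rw [hσid _ h1]
          intro h
          exact hkey p.2 p.1 h2 h1t h1 hadj.symm h.symm
      · intro p hp q hq h
        rw [Prod.ext_iff] at h
        exact Prod.ext (hσinj h.1) (hσinj h.2)
    -- membership lemmas
    have hmemBP : ∀ (Q : Finpartition (Finset.univ : Finset V)) (v w : V),
        ((v, w) ∈ badPairs G Q ↔ (v ≠ w ∧ ((G.Adj v w ∧ ¬ sameCluster Q v w) ∨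
          (¬ G.Adj v w ∧ sameCluster Q v w)))) := by
      intro Q v w
      rw [badPairs, mem_filter, Finset.mem_offDiag]
      exact ⟨fun h => ⟨h.1.2.2, h.2⟩, fun h => ⟨⟨mem_univ _, mem_univ _, h.1⟩, h.2⟩⟩
    have hmemD : ∀ v w : V, ((v, w) ∈ D ↔ (v ∈ t ∧ w ∈ t ∧ v ≠ w ∧ ¬ (v ∈ A₁ ↔ w ∈ A₁))) := by
      intro v w
      rw [hD, mem_filter, Finset.mem_offDiag]
      tauto
    have hmemDp : ∀ v w : V, ((v, w) ∈ Dp ↔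
        ((v ∈ t ∧ w ∈ t ∧ v ≠ w ∧ ¬ (v ∈ A₁ ↔ w ∈ A₁)) ∧ G.Adj v w)) := by
      intro v w
      rw [hDp, mem_filter, hmemD]
    have hmemDm : ∀ v w : V, ((v, w) ∈ Dm ↔
        ((v ∈ t ∧ w ∈ t ∧ v ≠ w ∧ ¬ (v ∈ A₁ ↔ w ∈ A₁)) ∧ ¬ G.Adj v w)) := by
      intro v w
      rw [hDm, mem_filter, hmemD]
    have hDmsub : Dm ⊆ badPairs G P := by
      intro p hp
      obtain ⟨v, w⟩ := p
      rw [hmemDm] at hp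
      rw [hmemBP]
      exact ⟨hp.1.2.2.1, Or.inr ⟨hp.2, ⟨t, ht, hp.1.1, hp.1.2.1⟩⟩⟩
    have hbadext : badPairs G P' = (badPairs G P \ Dm) ∪ Dp := by
      ext p
      obtain ⟨v, w⟩ := p
      rw [mem_union, mem_sdiff, hmemBP, hmemBP, hmemDp, hmemDm]
      by_cases hvw : v = w
      · constructor
        · rintro ⟨h, -⟩
          exact absurd hvw h
        · rintro (⟨⟨h, -⟩, -⟩ | ⟨⟨-, -, h, -⟩, -⟩) <;> exact absurd hvw h
      · by_cases hvt : v ∈ t ∧ w ∈ t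
        · by_cases hcross : v ∈ A₁ ↔ w ∈ A₁
          · have hsEq : sameCluster P' v w ↔ sameCluster P v w := by
              rw [hsame_t v w hvt.1 hvt.2]
              constructor
              · intro _
                exact ⟨t, ht, hvt.1, hvt.2⟩
              · intro _
                by_cases h1 : v ∈ A₁
                · exact Or.inl ⟨h1, hcross.1 h1⟩
                · exact Or.inr ⟨mem_sdiff.2 ⟨hvt.1, h1⟩,
                    mem_sdiff.2 ⟨hvt.2, fun h => h1 (hcross.2 h)⟩⟩
            rw [hsEq]
            have hX : ¬ (v ∈ t ∧ w ∈ t ∧ v ≠ w ∧ ¬ (v ∈ A₁ ↔ w ∈ A₁)) :=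
              fun h => h.2.2.2 hcross
            constructor
            · intro h
              exact Or.inl ⟨h, fun hx => hX hx.1⟩
            · rintro (⟨h, -⟩ | ⟨hx, -⟩)
              · exact h
              · exact absurd hx hX
          · have hsP : sameCluster P v w := ⟨t, ht, hvt.1, hvt.2⟩
            have hsP' : ¬ sameCluster P' v w := by
              rw [hsame_t v w hvt.1 hvt.2]
              rintro (⟨h1, h2⟩ | ⟨h1, h2⟩)
              · exact hcross (iff_of_true h1 h2)
              · exact hcross (iff_of_false (mem_sdiff.1 h1).2 (mem_sdiff.1 h2).2)
            have hX : v ∈ t ∧ w ∈ t ∧ v ≠ w ∧ ¬ (v ∈ A₁ ↔ w ∈ A₁) :=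
              ⟨hvt.1, hvt.2, hvw, hcross⟩
            constructor
            · rintro ⟨hne, ⟨hadj, -⟩ | ⟨hnadj, hs'⟩⟩
              · exact Or.inr ⟨hX, hadj⟩
              · exact absurd hs' hsP'
            · rintro (⟨⟨hne, ⟨hadj, hnsp⟩ | ⟨hnadj, -⟩⟩, hno⟩ | ⟨hx, hadj⟩)
              · exact absurd hsP hnsp
              · exact absurd ⟨hX, hnadj⟩ hno
              · exact ⟨hx.2.2.1, Or.inl ⟨hadj, hsP'⟩⟩
        · have hsEq : sameCluster P' v w ↔ sameCluster P v w := hsame_out v w hvt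
          rw [hsEq]
          have hX : ¬ (v ∈ t ∧ w ∈ t ∧ v ≠ w ∧ ¬ (v ∈ A₁ ↔ w ∈ A₁)) :=
            fun h => hvt ⟨h.1, h.2.1⟩
          constructor
          · intro h
            exact Or.inl ⟨h, fun hx => hX hx.1⟩
          · rintro (⟨h, -⟩ | ⟨hx, -⟩)
            · exact h
            · exact absurd hx hX
    have hbadcard : (badPairs G P').card ≤ (badPairs G P).card := by
      rw [hbadext]
      have h1 := card_union_le (badPairs G P \ Dm) Dp
      have h2 : (badPairs G P \ Dm).card = (badPairs G P).card - Dm.card := card_sdiff_of_subset hDmsub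
      have h3 := card_le_card hDmsub
      omega
    have hcost' : clusterCost G P' ≤ clusterCost G P := by
      rw [clusterCost_eq_badPairs, clusterCost_eq_badPairs]
      exact Nat.div_le_div_right hbadcard
    -- fairness of P'
    have hvals : (χ a = 0 ∧ χ b = 1) ∨ (χ a = 1 ∧ χ b = 0) := by
      rcases hfin2 (χ a) with h1 | h1 <;> rcases hfin2 (χ b) with h2 | h2 <;>
        first
          | exact Or.inl ⟨h1, h2⟩
          | exact Or.inr ⟨h1, h2⟩
          | exact absurd (h1.trans h2.symm) hab
    have hA₁f0 : (A₁.filter fun v => χ v = 0).card = 1 := by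
      rcases hvals with ⟨h1, h2⟩ | ⟨h1, h2⟩ <;>
        · rw [hA₁]
          rw [show ({a, b} : Finset V) = insert a {b} from rfl, filter_insert, filter_singleton]
          simp [h1, h2]
    have hA₁f1 : (A₁.filter fun v => χ v = 1).card = 1 := by
      rcases hvals with ⟨h1, h2⟩ | ⟨h1, h2⟩ <;>
        · rw [hA₁]
          rw [show ({a, b} : Finset V) = insert a {b} from rfl, filter_insert, filter_singleton]
          simp [h1, h2]
    have hA₁bal : IsBalanced χ A₁ := by
      rw [IsBalanced, hA₁f0, hA₁f1]
    have hA₂bal : IsBalanced χ A₂ := by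
      have he0 : A₂.filter (fun v => χ v = 0) =
          t.filter (fun v => χ v = 0) \ A₁.filter (fun v => χ v = 0) := by
        rw [hA₂]
        ext z
        simp only [mem_filter, mem_sdiff]
        tauto
      have he1 : A₂.filter (fun v => χ v = 1) =
          t.filter (fun v => χ v = 1) \ A₁.filter (fun v => χ v = 1) := by
        rw [hA₂]
        ext z
        simp only [mem_filter, mem_sdiff]
        tauto
      rw [IsBalanced, he0, he1,
        card_sdiff_of_subset (filter_subset_filter _ hA₁sub), card_sdiff_of_subset (filter_subset_filter _ hA₁sub),
        hA₁f0, hA₁f1, hbal]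
    have hP'fair : IsBalancedClustering χ P' := by
      intro u hu
      rcases hmem' u hu with rfl | rfl | ⟨hu', -⟩
      exacts [hA₁bal, hA₂bal, hPfair u hu']
    -- strict decrease of the same-cluster measure
    have hMss : (Finset.univ.offDiag.filter fun p : V × V => sameCluster P' p.1 p.2) ⊂
        (Finset.univ.offDiag.filter fun p : V × V => sameCluster P p.1 p.2) := by
      rw [Finset.ssubset_iff_of_subset]
      · obtain ⟨z, hz⟩ := hA₂ne
        have hzt : z ∈ t := hA₂sub hz
        have hza : a ≠ z := by
          intro h
          exact (mem_sdiff.1 hz).2 (h ▸ haA₁)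
        refine ⟨(a, z), mem_filter.2 ⟨Finset.mem_offDiag.2 ⟨mem_univ _, mem_univ _, hza⟩,
          ⟨t, ht, hat, hzt⟩⟩, ?_⟩
        intro hmem
        have h := (mem_filter.1 hmem).2
        rw [hsame_t a z hat hzt] at h
        rcases h with ⟨-, h2⟩ | ⟨h1, -⟩
        · exact (mem_sdiff.1 hz).2 h2
        · exact (mem_sdiff.1 h1).2 haA₁
      · intro p hp
        exact mem_filter.2 ⟨(mem_filter.1 hp).1, hsame'P _ _ (mem_filter.1 hp).2⟩
    have hMlt := card_lt_card hMss
    have hcostm : clusterCost G P' = m := by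
      have h1 : clusterCost G P' ≤ m := hPcost ▸ hcost'
      have h2 : m ≤ clusterCost G P' := Nat.sInf_le ⟨P', hP'fair, rfl⟩
      omega
    have h3 : sInf T ≤ (Finset.univ.offDiag.filter fun p : V × V => sameCluster P' p.1 p.2).card :=
      Nat.sInf_le ⟨P', hP'fair, hcostm, rfl⟩
    omega





end
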